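/- Let c > 0 and define φ_c(x) = sup_{u ∈ ℝ} (ux − ln cosh(uc)). Then the function x ↦ φ_c(x) − x²/(2c²) is nonnegative on [−c, c], increasing on [0, c], decreasing on [−c, 0], and equals 0 at x = 0. -/

import Mathlib

open Real

/-- The Cramér transform of the symmetric Bernoulli distribution `(δ_{-c} + δ_c)/2`. -/
noncomputable def phiC (c : ℝ) (x : ℝ) : ℝ :=
  ⨆ u : ℝ, (u * x - Real.log (Real.cosh (u * c)))

/-- The explicit formula for `phiC`. -/
noncomputable def fC (c : ℝ) (x : ℝ) : ℝ :=
  ((c + x) * Real.log (c + x) + (c - x) * Real.log (c - x)) / (2 * c) - Real.log c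

lemma logcosh_hasDeriv (x : ℝ) : HasDerivAt (fun t => Real.log (Real.cosh t)) (Real.tanh x) x := by
  have := (Real.hasDerivAt_cosh x).log (Real.cosh_pos x).ne'
  simpa [Real.tanh_eq_sinh_div_cosh] using this

lemma tanh_mono : Monotone Real.tanh := by
  intro s t hst
  rw [Real.tanh_eq_sinh_div_cosh, Real.tanh_eq_sinh_div_cosh,
    div_le_div_iff₀ (Real.cosh_pos s) (Real.cosh_pos t)]
  have h1 : 0 ≤ Real.sinh (t - s) := by
    rw [Real.sinh_nonneg_iff]; linarith
  rw [Real.sinh_sub] at h1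
  nlinarith

lemma logcosh_tangent (s t : ℝ) :
    Real.log (Real.cosh s) + (t - s) * Real.tanh s ≤ Real.log (Real.cosh t) := by
  rcases lt_trichotomy s t with h | h | h
  · obtain ⟨ξ, hξ, hslope⟩ := exists_hasDerivAt_eq_slope (fun t => Real.log (Real.cosh t))
      Real.tanh h (fun x _ => (logcosh_hasDeriv x).continuousAt.continuousWithinAt)
      (fun x _ => logcosh_hasDeriv x)
    have hm : Real.tanh s ≤ Real.tanh ξ := tanh_mono hξ.1.le
    have ht : (0:ℝ) < t - s := by linarith
    have heq : Real.tanh ξ * (t - s) = Real.log (Real.cosh t) - Real.log (Real.cosh s) := by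
      rw [hslope]; field_simp
    nlinarith [mul_le_mul_of_nonneg_right hm ht.le]
  · simp [h]
  · obtain ⟨ξ, hξ, hslope⟩ := exists_hasDerivAt_eq_slope (fun t => Real.log (Real.cosh t))
      Real.tanh h (fun x _ => (logcosh_hasDeriv x).continuousAt.continuousWithinAt)
      (fun x _ => logcosh_hasDeriv x)
    have hm : Real.tanh ξ ≤ Real.tanh s := tanh_mono hξ.2.le
    have hst : (0:ℝ) < s - t := by linarith
    have heq : Real.tanh ξ * (s - t) = Real.log (Real.cosh s) - Real.log (Real.cosh t) := by
      rw [hslope]; field_simp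
    nlinarith [mul_le_mul_of_nonneg_right hm hst.le]

lemma phiC_neg (c x : ℝ) : phiC c (-x) = phiC c x := by
  unfold phiC
  rw [iSup, iSup]
  congr 1
  ext y
  constructor
  · rintro ⟨u, rfl⟩
    exact ⟨-u, by simp only [neg_mul, Real.cosh_neg]; ring_nf⟩
  · rintro ⟨u, rfl⟩
    exact ⟨-u, by simp only [neg_mul, Real.cosh_neg]; ring_nf⟩

lemma phiC_eq_interior (c x : ℝ) (hc : 0 < c) (hx1 : -c < x) (hx2 : x < c) :
    phiC c x = fC c x := by
  have ha : (0:ℝ) < c + x := by linarith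
  have hb : (0:ℝ) < c - x := by linarith
  set sa := Real.sqrt (c + x) with hsa_def
  set sb := Real.sqrt (c - x) with hsb_def
  have hsa : 0 < sa := Real.sqrt_pos.mpr ha
  have hsb : 0 < sb := Real.sqrt_pos.mpr hb
  have hsa2 : sa * sa = c + x := Real.mul_self_sqrt ha.le
  have hsb2 : sb * sb = c - x := Real.mul_self_sqrt hb.le
  set ts := (Real.log (c + x) - Real.log (c - x)) / 2 with hts_def
  have hexp : Real.exp ts = sa / sb := by
    rw [show ts = Real.log (sa / sb) by
      rw [Real.log_div hsa.ne' hsb.ne', hsa_def, hsb_def, Real.log_sqrt ha.le,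
        Real.log_sqrt hb.le]; ring]
    exact Real.exp_log (div_pos hsa hsb)
  have hexpneg : Real.exp (-ts) = sb / sa := by
    rw [Real.exp_neg, hexp, inv_div]
  have hcosh : Real.cosh ts = c / (sa * sb) := by
    rw [Real.cosh_eq, hexp, hexpneg]
    field_simp
    linear_combination hsa2 + hsb2
  have hsinh : Real.sinh ts = x / (sa * sb) := by
    rw [Real.sinh_eq, hexp, hexpneg]
    field_simp
    linear_combination hsa2 - hsb2
  have htanh : Real.tanh ts = x / c := by
    rw [Real.tanh_eq_sinh_div_cosh, hcosh, hsinh]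
    field_simp
  have hlogcosh : Real.log (Real.cosh ts) =
      Real.log c - (Real.log (c + x) + Real.log (c - x)) / 2 := by
    rw [hcosh, Real.log_div hc.ne' (mul_pos hsa hsb).ne', Real.log_mul hsa.ne' hsb.ne',
      hsa_def, hsb_def, Real.log_sqrt ha.le, Real.log_sqrt hb.le]
    ring
  have hval : (ts / c) * x - Real.log (Real.cosh ((ts / c) * c)) = fC c x := by
    rw [div_mul_cancel₀ _ hc.ne', hlogcosh, hts_def, fC]
    field_simp
    ring
  have hupper : ∀ u : ℝ, u * x - Real.log (Real.cosh (u * c)) ≤ fC c x := by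
    intro u
    have htan := logcosh_tangent ts (u * c)
    rw [htanh] at htan
    have hkey : u * x - (u * c - ts) * (x / c) = ts / c * x := by
      field_simp; ring
    have : u * x - Real.log (Real.cosh (u * c)) ≤
        ts / c * x - Real.log (Real.cosh ts) := by
      nlinarith [htan]
    calc u * x - Real.log (Real.cosh (u * c)) ≤ ts / c * x - Real.log (Real.cosh ts) := this
      _ = fC c x := by rw [← hval, div_mul_cancel₀ _ hc.ne']
  refine le_antisymm (ciSup_le hupper) ?_
  have hbdd : BddAbove (Set.range fun u => u * x - Real.log (Real.cosh (u * c))) := by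
    refine ⟨fC c x, ?_⟩
    rintro _ ⟨u, rfl⟩
    exact hupper u
  have := le_ciSup hbdd (ts / c)
  rwa [hval] at this

lemma phiC_top (c : ℝ) (hc : 0 < c) : phiC c c = Real.log 2 := by
  have hupper : ∀ u : ℝ, u * c - Real.log (Real.cosh (u * c)) ≤ Real.log 2 := by
    intro u
    have h1 : Real.exp (u * c) ≤ 2 * Real.cosh (u * c) := by
      rw [Real.cosh_eq]
      have := Real.exp_pos (-(u * c))
      linarith
    have h2 : u * c ≤ Real.log (2 * Real.cosh (u * c)) := by
      calc u * c = Real.log (Real.exp (u * c)) := (Real.log_exp _).symm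
        _ ≤ _ := Real.log_le_log (Real.exp_pos _) h1
    rw [Real.log_mul two_ne_zero (Real.cosh_pos _).ne'] at h2
    linarith
  have hbdd : BddAbove (Set.range fun u => u * c - Real.log (Real.cosh (u * c))) :=
    ⟨Real.log 2, by rintro _ ⟨u, rfl⟩; exact hupper u⟩
  refine le_antisymm (ciSup_le hupper) ?_
  refine le_of_forall_lt fun w hw => ?_
  set ε := Real.log 2 - w with hε_def
  have hε : 0 < ε := by linarith
  set u := (1 - Real.log ε) / (2 * c) with hu_def
  have h2uc : 2 * (u * c) = 1 - Real.log ε := by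
    rw [hu_def]; field_simp
  set E := Real.exp (-(2 * (u * c))) with hE_def
  have hE : 0 < E := Real.exp_pos _
  have hEε : E < ε := by
    rw [hE_def, h2uc]
    have : Real.exp (-(1 - Real.log ε)) = ε * Real.exp (-1) := by
      rw [show -(1 - Real.log ε) = Real.log ε + (-1) by ring, Real.exp_add, Real.exp_log hε]
    rw [this]
    nlinarith [Real.exp_lt_one_iff.mpr (show (-1:ℝ) < 0 by norm_num), hε]
  have hcosh : Real.cosh (u * c) = Real.exp (u * c) * (1 + E) / 2 := by
    rw [Real.cosh_eq, hE_def]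
    rw [show -(2 * (u * c)) = -(u*c) + -(u*c) by ring, Real.exp_add]
    have : Real.exp (u*c) * Real.exp (-(u*c)) = 1 := by
      rw [← Real.exp_add]; simp
    nlinarith [Real.exp_pos (-(u*c))]
  have hlog : Real.log (Real.cosh (u * c)) = u * c + Real.log (1 + E) - Real.log 2 := by
    rw [hcosh, Real.log_div (by positivity) two_ne_zero, Real.log_mul (Real.exp_pos _).ne'
      (by positivity), Real.log_exp]
  have hlog1E : Real.log (1 + E) ≤ E := by
    have := Real.log_le_sub_one_of_pos (show (0:ℝ) < 1 + E by linarith)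
    linarith
  have hterm : w < u * c - Real.log (Real.cosh (u * c)) := by
    rw [hlog]
    have : Real.log (1 + E) < ε := lt_of_le_of_lt hlog1E hEε
    linarith
  exact lt_of_lt_of_le hterm (le_ciSup hbdd u)

lemma fC_top (c : ℝ) (hc : 0 < c) : fC c c = Real.log 2 := by
  unfold fC
  rw [sub_self, zero_mul, add_zero, show c + c = 2 * c by ring]
  have h : 2 * c * Real.log (2 * c) / (2 * c) = Real.log (2 * c) := by
    field_simp
  rw [h, Real.log_mul two_ne_zero hc.ne']
  ring

lemma fC_even (c x : ℝ) : fC c (-x) = fC c x := by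
  unfold fC
  rw [show c + -x = c - x by ring, show c - -x = c + x by ring]
  ring

lemma fC_zero (c : ℝ) (hc : 0 < c) : fC c 0 = 0 := by
  unfold fC
  rw [add_zero, sub_zero]
  field_simp
  ring

lemma phiC_eq (c x : ℝ) (hc : 0 < c) (hx : x ∈ Set.Icc (-c) c) : phiC c x = fC c x := by
  obtain ⟨h1, h2⟩ := hx
  rcases eq_or_lt_of_le h2 with rfl | h2'
  · rw [phiC_top x hc, fC_top x hc]
  rcases eq_or_lt_of_le h1 with h | h1'
  · rw [← h, phiC_neg c c, fC_even c c, phiC_top c hc, fC_top c hc]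
  · exact phiC_eq_interior c x hc h1' h2'

lemma fC_continuous (c : ℝ) : Continuous (fun x => fC c x - x ^ 2 / (2 * c ^ 2)) := by
  unfold fC
  have h1 : Continuous (fun x : ℝ => (c + x) * Real.log (c + x)) :=
    Real.continuous_mul_log.comp (continuous_const.add continuous_id)
  have h2 : Continuous (fun x : ℝ => (c - x) * Real.log (c - x)) :=
    Real.continuous_mul_log.comp (continuous_const.sub continuous_id)
  fun_prop

lemma G_pos (c : ℝ) (hc : 0 < c) {x : ℝ} (hx1 : 0 < x) (hx2 : x < c) :
    0 < (Real.log (c + x) - Real.log (c - x)) / (2 * c) - x / c ^ 2 := by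
  set G := fun y : ℝ => (Real.log (c + y) - Real.log (c - y)) / (2 * c) - y / c ^ 2 with hG
  have key : StrictMonoOn G (Set.Ico 0 c) := by
    apply strictMonoOn_of_deriv_pos (convex_Ico 0 c)
    · apply ContinuousOn.sub
      · apply ContinuousOn.div_const
        apply ContinuousOn.sub
        · apply ContinuousOn.log
          · fun_prop
          · intro y hy
            simp only [Set.mem_Ico] at hy
            have : 0 < c + y := by linarith [hy.1]
            exact this.ne'
        · apply ContinuousOn.log
          · fun_prop
          · intro y hy
            simp only [Set.mem_Ico] at hy
            have : 0 < c - y := by linarith [hy.2]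
            exact this.ne'
      · fun_prop
    · intro y hy
      rw [interior_Ico] at hy
      obtain ⟨hy1, hy2⟩ := hy
      have ha : (0:ℝ) < c + y := by linarith
      have hb : (0:ℝ) < c - y := by linarith
      have hd : HasDerivAt G ((1 / (c + y) + 1 / (c - y)) / (2 * c) - 1 / c ^ 2) y := by
        have d1 : HasDerivAt (fun z : ℝ => c + z) 1 y := (hasDerivAt_id y).const_add c
        have d2 : HasDerivAt (fun z : ℝ => c - z) (-1) y := (hasDerivAt_id y).const_sub c
        have l1 : HasDerivAt (fun z : ℝ => Real.log (c + z)) (1 / (c + y)) y := by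
          simpa using d1.log ha.ne'
        have l2 : HasDerivAt (fun z : ℝ => Real.log (c - z)) (-1 / (c - y)) y := by
          simpa using d2.log hb.ne'
        have l3 : HasDerivAt (fun z : ℝ => z / c ^ 2) (1 / c ^ 2) y := by
          simpa using (hasDerivAt_id y).div_const (c ^ 2)
        have := ((l1.sub l2).div_const (2 * c)).sub l3
        refine this.congr_deriv ?_
        ring
      rw [hd.deriv]
      have heq : (1 / (c + y) + 1 / (c - y)) / (2 * c) - 1 / c ^ 2
          = y ^ 2 / ((c + y) * (c - y) * c ^ 2) := by
        field_simp
        ring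
      rw [heq]
      positivity
  have h0 : G 0 = 0 := by
    simp [hG]
  have := key (Set.mem_Ico.mpr ⟨le_refl 0, hc⟩) (Set.mem_Ico.mpr ⟨hx1.le, hx2⟩) hx1
  rw [h0] at this
  exact this

lemma F_strictMono (c : ℝ) (hc : 0 < c) :
    StrictMonoOn (fun x => fC c x - x ^ 2 / (2 * c ^ 2)) (Set.Icc 0 c) := by
  apply strictMonoOn_of_deriv_pos (convex_Icc 0 c) (fC_continuous c).continuousOn
  intro x hx
  rw [interior_Icc] at hx
  obtain ⟨hx1, hx2⟩ := hx
  have ha : (0:ℝ) < c + x := by linarith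
  have hb : (0:ℝ) < c - x := by linarith
  have hd : HasDerivAt (fun x => fC c x - x ^ 2 / (2 * c ^ 2))
      ((Real.log (c + x) - Real.log (c - x)) / (2 * c) - x / c ^ 2) x := by
    have d1 : HasDerivAt (fun z : ℝ => c + z) 1 x := (hasDerivAt_id x).const_add c
    have d2 : HasDerivAt (fun z : ℝ => c - z) (-1) x := (hasDerivAt_id x).const_sub c
    have l1 : HasDerivAt (fun z : ℝ => Real.log (c + z)) (1 / (c + x)) x := by
      simpa using d1.log ha.ne'
    have l2 : HasDerivAt (fun z : ℝ => Real.log (c - z)) (-1 / (c - x)) x := by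
      simpa using d2.log hb.ne'
    have m1 : HasDerivAt (fun z : ℝ => (c + z) * Real.log (c + z))
        (Real.log (c + x) + 1) x := by
      have := d1.mul l1
      refine this.congr_deriv ?_
      field_simp
    have m2 : HasDerivAt (fun z : ℝ => (c - z) * Real.log (c - z))
        (-Real.log (c - x) - 1) x := by
      have := d2.mul l2
      refine this.congr_deriv ?_
      field_simp
      ring
    have p1 : HasDerivAt (fun z : ℝ => z ^ 2 / (2 * c ^ 2)) (x / c ^ 2) x := by
      have := (hasDerivAt_pow 2 x).div_const (2 * c ^ 2)
      refine this.congr_deriv ?_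
      field_simp
      ring
    have final := (((m1.add m2).div_const (2 * c)).sub_const (Real.log c)).sub p1
    have hval : (Real.log (c + x) + 1 + (-Real.log (c - x) - 1)) / (2 * c) - x / c ^ 2
        = (Real.log (c + x) - Real.log (c - x)) / (2 * c) - x / c ^ 2 := by ring
    rw [← hval]
    exact final
  rw [hd.deriv]
  exact G_pos c hc hx1 hx2

theorem phiC_sub_sq_properties (c : ℝ) (hc : 0 < c) :
    (∀ x ∈ Set.Icc (-c) c, 0 ≤ phiC c x - x ^ 2 / (2 * c ^ 2)) ∧
    StrictMonoOn (fun x => phiC c x - x ^ 2 / (2 * c ^ 2)) (Set.Icc 0 c) ∧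
    StrictAntiOn (fun x => phiC c x - x ^ 2 / (2 * c ^ 2)) (Set.Icc (-c) 0) ∧
    phiC c 0 - 0 ^ 2 / (2 * c ^ 2) = 0 := by
  have hsub : Set.Icc (0:ℝ) c ⊆ Set.Icc (-c) c := Set.Icc_subset_Icc (by linarith) le_rfl
  have hEqOn : Set.EqOn (fun x => fC c x - x ^ 2 / (2 * c ^ 2))
      (fun x => phiC c x - x ^ 2 / (2 * c ^ 2)) (Set.Icc 0 c) := by
    intro x hx
    simp only
    rw [phiC_eq c x hc (hsub hx)]
  have hmono : StrictMonoOn (fun x => phiC c x - x ^ 2 / (2 * c ^ 2)) (Set.Icc 0 c) :=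
    (F_strictMono c hc).congr hEqOn
  have geven : ∀ z : ℝ, phiC c (-z) - (-z) ^ 2 / (2 * c ^ 2)
      = phiC c z - z ^ 2 / (2 * c ^ 2) := by
    intro z
    rw [phiC_neg, neg_sq]
  have hanti : StrictAntiOn (fun x => phiC c x - x ^ 2 / (2 * c ^ 2)) (Set.Icc (-c) 0) := by
    intro x hx y hy hxy
    obtain ⟨hx1, hx2⟩ := hx
    obtain ⟨hy1, hy2⟩ := hy
    have key := hmono (Set.mem_Icc.mpr ⟨by linarith, by linarith⟩)
      (Set.mem_Icc.mpr ⟨by linarith, by linarith⟩) (show -y < -x by linarith)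
    simp only at key ⊢
    rw [geven x, geven y] at key
    exact key
  have g0 : phiC c 0 - 0 ^ 2 / (2 * c ^ 2) = 0 := by
    rw [phiC_eq c 0 hc (Set.mem_Icc.mpr ⟨by linarith, hc.le⟩), fC_zero c hc]
    norm_num
  refine ⟨?_, hmono, hanti, g0⟩
  intro x hx
  obtain ⟨hx1, hx2⟩ := hx
  rcases lt_trichotomy x 0 with h | rfl | h
  · have := hanti (Set.mem_Icc.mpr ⟨hx1, h.le⟩) (Set.mem_Icc.mpr ⟨by linarith, le_rfl⟩) h
    simp only at this
    rw [g0] at this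
    linarith
  · rw [g0]
  · have := hmono (Set.mem_Icc.mpr ⟨le_rfl, hc.le⟩) (Set.mem_Icc.mpr ⟨h.le, hx2⟩) h
    simp only at this
    rw [g0] at this
    linarith
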